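/- For two agents with generalized binary additive valuations (every value in {0, b} for fixed b > 0), the following allocation is TEFX: goods valued b by both agents are allocated alternately (round-robin); goods valued b by exactly one agent go to that agent; goods valued 0 by both go to the agent who is later (or never) first-allocated a good valued b only by themselves. At every round t and for both agents i ≠ j: v_i(A^t_i) >= v_i(A^t_j \ {g}) for all g ∈ A^t_j. -/
import Mathlib

open Finset

private lemma range_parity15 (N : ℕ) :
    ((Finset.range N).filter (fun m => Even m)).card = (N + 1) / 2 ∧
    ((Finset.range N).filter (fun m => ¬ Even m)).card = N / 2 := by
  induction N with
  | zero => simp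
  | succ n ih =>
    have hn : n ∉ Finset.range n := by simp
    obtain ⟨ih1, ih2⟩ := ih
    rw [Finset.range_add_one, Finset.filter_insert, Finset.filter_insert]
    by_cases h : Even n
    · have h' : n % 2 = 0 := Nat.even_iff.mp h
      rw [if_pos h, if_neg (by simpa using h),
        Finset.card_insert_of_notMem (fun hm => hn (Finset.mem_of_mem_filter _ hm)), ih1, ih2]
      omega
    · have h' : n % 2 = 1 := Nat.odd_iff.mp (Nat.not_even_iff_odd.mp h)
      rw [if_neg h, if_pos h,
        Finset.card_insert_of_notMem (fun hm => hn (Finset.mem_of_mem_filter _ hm)), ih1, ih2]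
      omega

private lemma count_parity15 {G : Type*} [DecidableEq G] (S : Finset G) (key : G → ℕ)
    (hinj : ∀ g g' : G, key g = key g' → g = g') (Bnd : ℕ) (k : G → ℕ)
    (hk : ∀ g, k g = (S.filter fun g' => key g' < key g).card) :
    ((S.filter fun g => key g < Bnd ∧ ¬ Even (k g)).card ≤
      (S.filter fun g => key g < Bnd ∧ Even (k g)).card) ∧
    ((S.filter fun g => key g < Bnd ∧ Even (k g)).card ≤
      (S.filter fun g => key g < Bnd ∧ ¬ Even (k g)).card + 1) := by
  set At := S.filter fun g => key g < Bnd with hAt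
  set N := At.card with hN
  have hmemAt : ∀ g, g ∈ At ↔ g ∈ S ∧ key g < Bnd := by
    intro g; rw [hAt, Finset.mem_filter]
  have hsub : ∀ g ∈ At, (S.filter fun g' => key g' < key g) ⊆ At := by
    intro g hg g' hg'
    rw [Finset.mem_filter] at hg'
    rw [hmemAt] at hg ⊢
    exact ⟨hg'.1, Nat.lt_trans hg'.2 hg.2⟩
  have hlt : ∀ g ∈ At, k g < N := by
    intro g hg
    rw [hk, hN]
    refine Finset.card_lt_card ((Finset.ssubset_iff_of_subset (hsub g hg)).mpr ⟨g, hg, ?_⟩)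
    simp
  have hkinj : ∀ g ∈ At, ∀ g' ∈ At, k g = k g' → g = g' := by
    intro g hg g' hg' hkk
    apply hinj
    by_contra hne
    rcases Nat.lt_or_ge (key g) (key g') with h | h
    · have hss : (S.filter fun x => key x < key g) ⊂ (S.filter fun x => key x < key g') := by
        refine (Finset.ssubset_iff_of_subset ?_).mpr ⟨g, ?_, ?_⟩
        · intro x hx; rw [Finset.mem_filter] at hx ⊢; exact ⟨hx.1, Nat.lt_trans hx.2 h⟩
        · rw [Finset.mem_filter]; exact ⟨((hmemAt g).mp hg).1, h⟩
        · rw [Finset.mem_filter]; push_neg; intro _; exact le_refl _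
      have := Finset.card_lt_card hss
      rw [← hk, ← hk] at this; omega
    · have h' : key g' < key g := Nat.lt_of_le_of_ne h (fun he => hne he.symm)
      have hss : (S.filter fun x => key x < key g') ⊂ (S.filter fun x => key x < key g) := by
        refine (Finset.ssubset_iff_of_subset ?_).mpr ⟨g', ?_, ?_⟩
        · intro x hx; rw [Finset.mem_filter] at hx ⊢; exact ⟨hx.1, Nat.lt_trans hx.2 h'⟩
        · rw [Finset.mem_filter]; exact ⟨((hmemAt g').mp hg').1, h'⟩
        · rw [Finset.mem_filter]; push_neg; intro _; exact le_refl _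
      have := Finset.card_lt_card hss
      rw [← hk, ← hk] at this; omega
  have himg : At.image k = Finset.range N := by
    apply Finset.eq_of_subset_of_card_le
    · intro m hm
      rw [Finset.mem_image] at hm
      obtain ⟨g, hg, rfl⟩ := hm
      exact Finset.mem_range.mpr (hlt g hg)
    · rw [Finset.card_range, Finset.card_image_of_injOn (fun g hg g' hg' => hkinj g hg g' hg')]
  have hcountE : (At.filter fun g => Even (k g)).card =
      ((Finset.range N).filter fun m => Even m).card := by
    rw [← himg, Finset.filter_image]
    exact (Finset.card_image_of_injOn (fun g hg g' hg' hh =>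
      hkinj g (Finset.mem_of_mem_filter _ hg) g' (Finset.mem_of_mem_filter _ hg') hh)).symm
  have hcountO : (At.filter fun g => ¬ Even (k g)).card =
      ((Finset.range N).filter fun m => ¬ Even m).card := by
    rw [← himg, Finset.filter_image]
    exact (Finset.card_image_of_injOn (fun g hg g' hg' hh =>
      hkinj g (Finset.mem_of_mem_filter _ hg) g' (Finset.mem_of_mem_filter _ hg') hh)).symm
  have h1 : (S.filter fun g => key g < Bnd ∧ Even (k g)) = At.filter fun g => Even (k g) := by
    rw [hAt, Finset.filter_filter]
  have h2 : (S.filter fun g => key g < Bnd ∧ ¬ Even (k g)) =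
      At.filter fun g => ¬ Even (k g) := by
    rw [hAt, Finset.filter_filter]
  rw [h1, h2, hcountE, hcountO, (range_parity15 N).1, (range_parity15 N).2]
  omega

private lemma aux_alloc15 {G : Type*} [Fintype G] [DecidableEq G] (T : ℕ) (b : ℝ) (hb : 0 < b)
    (round : G → Fin T) (va vo : G → ℝ)
    (hva : ∀ g, va g = 0 ∨ va g = b) (hvo : ∀ g, vo g = 0 ∨ vo g = b)
    (hstar : ∀ t : Fin T, ∀ g, va g ≠ 0 → vo g = 0 → round g ≤ t →
      ∃ g', vo g' ≠ 0 ∧ va g' = 0 ∧ round g' ≤ t) :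
    ∃ B : Fin T → Bool → Finset G,
      (∀ t, B t true ∪ B t false = Finset.univ.filter (fun g => round g ≤ t)) ∧
      (∀ t, Disjoint (B t true) (B t false)) ∧
      (∀ t t', t ≤ t' → ∀ c, B t c ⊆ B t' c) ∧
      (∀ t, ∀ g ∈ B t false, ((B t false).erase g).sum va ≤ (B t true).sum va) ∧
      (∀ t, ∀ g ∈ B t true, ((B t true).erase g).sum vo ≤ (B t false).sum vo) := by
  classical
  set n := Fintype.card G with hn
  set idx : G → ℕ := fun g => ((Fintype.equivFin G) g : ℕ) with hidxdef
  have hidx : ∀ g, idx g < n := fun g => ((Fintype.equivFin G) g).isLt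
  set key : G → ℕ := fun g => (round g : ℕ) * n + idx g with hkeydef
  have hkey : ∀ g, key g = (round g : ℕ) * n + idx g := fun _ => rfl
  have hkeyinj : ∀ g g', key g = key g' → g = g' := by
    intro g g' h
    have h1 := hidx g
    have h2 := hidx g'
    have h3 := hkey g
    have h4 := hkey g'
    have hr : (round g : ℕ) = (round g' : ℕ) := by
      rcases lt_trichotomy (round g : ℕ) (round g' : ℕ) with hc | hc | hc
      · have hm : ((round g : ℕ) + 1) * n ≤ (round g' : ℕ) * n := Nat.mul_le_mul_right n hc
        have he : ((round g : ℕ) + 1) * n = (round g : ℕ) * n + n := by ring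
        omega
      · exact hc
      · have hm : ((round g' : ℕ) + 1) * n ≤ (round g : ℕ) * n := Nat.mul_le_mul_right n hc
        have he : ((round g' : ℕ) + 1) * n = (round g' : ℕ) * n + n := by ring
        omega
    have hi : idx g = idx g' := by
      rw [hr] at h3; omega
    have : (Fintype.equivFin G) g = (Fintype.equivFin G) g' := Fin.ext hi
    exact (Fintype.equivFin G).injective this
  have harr : ∀ (g : G) (t : Fin T), round g ≤ t ↔ key g < ((t : ℕ) + 1) * n := by
    intro g t
    have h1 := hidx g
    have h3 := hkey g
    constructor
    · intro h
      have hle : (round g : ℕ) ≤ (t : ℕ) := h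
      have hm : ((round g : ℕ) + 1) * n ≤ ((t : ℕ) + 1) * n :=
        Nat.mul_le_mul_right n (by omega)
      have he : ((round g : ℕ) + 1) * n = (round g : ℕ) * n + n := by ring
      omega
    · intro h
      by_contra hc
      have hlt : (t : ℕ) < (round g : ℕ) := lt_of_not_ge hc
      have hm : ((t : ℕ) + 1) * n ≤ (round g : ℕ) * n := Nat.mul_le_mul_right n (by omega)
      omega
  set S : Finset G := Finset.univ.filter (fun g => va g ≠ 0 ∧ vo g ≠ 0) with hS
  set k : G → ℕ := fun g => (S.filter fun g' => key g' < key g).card with hkdef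
  obtain ⟨owner, hownT⟩ : ∃ owner : G → Bool, ∀ g, owner g = true ↔
      ((va g ≠ 0 ∧ vo g ≠ 0 ∧ Even (k g)) ∨ (va g ≠ 0 ∧ vo g = 0)) := by
    refine ⟨fun g => if va g ≠ 0 ∧ vo g ≠ 0 then (if Even (k g) then true else false)
      else if va g ≠ 0 then true else false, fun g => ?_⟩
    dsimp only
    by_cases h1 : va g ≠ 0 ∧ vo g ≠ 0
    · by_cases h2 : Even (k g)
      · rw [if_pos h1, if_pos h2]; simp; exact Or.inl ⟨h1.1, h1.2, h2⟩
      · rw [if_pos h1, if_neg h2]; simp only [Bool.false_eq_true, false_iff]; tauto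
    · rw [if_neg h1]
      by_cases h3 : va g ≠ 0
      · rw [if_pos h3]; simp; right; constructor
        · exact h3
        · by_contra hvo0; exact h1 ⟨h3, hvo0⟩
      · rw [if_neg h3]; simp only [Bool.false_eq_true, false_iff]; tauto
  have hownF : ∀ g, owner g = false ↔
      ¬ ((va g ≠ 0 ∧ vo g ≠ 0 ∧ Even (k g)) ∨ (va g ≠ 0 ∧ vo g = 0)) := by
    intro g
    rw [← hownT g]
    cases owner g <;> simp
  refine ⟨fun t c => Finset.univ.filter (fun g => round g ≤ t ∧ owner g = c), ?_, ?_, ?_, ?_, ?_⟩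
  · intro t
    ext g
    simp only [Finset.mem_union, Finset.mem_filter, Finset.mem_univ, true_and]
    rcases Bool.eq_false_or_eq_true (owner g) with h | h <;> rw [h] <;> simp
  · intro t
    rw [Finset.disjoint_left]
    intro g hg1 hg2
    rw [Finset.mem_filter] at hg1 hg2
    rw [hg1.2.2] at hg2
    exact Bool.noConfusion hg2.2.2
  · intro t t' htt c g hg
    rw [Finset.mem_filter] at hg ⊢
    exact ⟨Finset.mem_univ g, le_trans hg.2.1 htt, hg.2.2⟩
  all_goals intro t
  all_goals
    have hsum : ∀ (s : Finset G) (w : G → ℝ), (∀ g, w g = 0 ∨ w g = b) →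
        s.sum w = b * (s.filter fun g => w g ≠ 0).card := by
      intro s w hw
      rw [← Finset.sum_filter_ne_zero s]
      rw [Finset.sum_congr rfl (g := fun _ => b)
        (fun g hg => (hw g).resolve_left (Finset.mem_filter.mp hg).2)]
      rw [Finset.sum_const, nsmul_eq_mul, mul_comm]
  all_goals
    have hEO : (S.filter fun g => round g ≤ t ∧ ¬ Even (k g)).card ≤
          (S.filter fun g => round g ≤ t ∧ Even (k g)).card ∧
        (S.filter fun g => round g ≤ t ∧ Even (k g)).card ≤
          (S.filter fun g => round g ≤ t ∧ ¬ Even (k g)).card + 1 := by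
      have hcp := count_parity15 S key hkeyinj (((t : ℕ) + 1) * n) k (fun g => rfl)
      have he : (S.filter fun g => key g < ((t : ℕ) + 1) * n ∧ Even (k g)) =
          (S.filter fun g => round g ≤ t ∧ Even (k g)) :=
        Finset.filter_congr (fun g _ => by rw [harr g t])
      have ho : (S.filter fun g => key g < ((t : ℕ) + 1) * n ∧ ¬ Even (k g)) =
          (S.filter fun g => round g ≤ t ∧ ¬ Even (k g)) :=
        Finset.filter_congr (fun g _ => by rw [harr g t])
      rw [he, ho] at hcp
      exact hcp
  -- agent a (valuation va) does not envy the false-bundle up to any good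
  · intro g hg
    rw [hsum _ va hva, hsum _ va hva]
    refine mul_le_mul_of_nonneg_left ?_ hb.le
    have c2 : ((Finset.univ.filter (fun x => round x ≤ t ∧ owner x = false)).filter
        fun x => va x ≠ 0).card = (S.filter fun x => round x ≤ t ∧ ¬ Even (k x)).card := by
      congr 1
      ext x
      simp only [Finset.mem_filter, Finset.mem_univ, true_and, hS, hownF]
      constructor
      · rintro ⟨⟨hr, hno⟩, hva0⟩
        have hvo0 : vo x ≠ 0 := by tauto
        exact ⟨⟨hva0, hvo0⟩, hr, by tauto⟩
      · rintro ⟨⟨hva0, hvo0⟩, hr, hne⟩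
        exact ⟨⟨hr, by tauto⟩, hva0⟩
    have c1 : (((Finset.univ.filter (fun x => round x ≤ t ∧ owner x = false)).erase g).filter
        fun x => va x ≠ 0).card ≤ ((Finset.univ.filter
        (fun x => round x ≤ t ∧ owner x = false)).filter fun x => va x ≠ 0).card :=
      Finset.card_le_card (Finset.filter_subset_filter _ (Finset.erase_subset _ _))
    have c4 : (S.filter fun x => round x ≤ t ∧ Even (k x)).card ≤
        ((Finset.univ.filter (fun x => round x ≤ t ∧ owner x = true)).filter
        fun x => va x ≠ 0).card := by
      apply Finset.card_le_card
      intro x hx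
      simp only [Finset.mem_filter, Finset.mem_univ, true_and, hS] at hx ⊢
      exact ⟨⟨hx.2.1, (hownT x).mpr (Or.inl ⟨hx.1.1, hx.1.2, hx.2.2⟩)⟩, hx.1.1⟩
    have := hEO.1
    have hfin : (((Finset.univ.filter (fun x => round x ≤ t ∧ owner x = false)).erase g).filter
        fun x => va x ≠ 0).card ≤ ((Finset.univ.filter
        (fun x => round x ≤ t ∧ owner x = true)).filter fun x => va x ≠ 0).card := by omega
    exact_mod_cast hfin
  -- agent o (valuation vo) is EFX towards the true-bundle
  · intro g hg
    rw [Finset.mem_filter] at hg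
    rw [hsum _ vo hvo, hsum _ vo hvo]
    refine mul_le_mul_of_nonneg_left ?_ hb.le
    have d1 : ((Finset.univ.filter (fun x => round x ≤ t ∧ owner x = true)).filter
        fun x => vo x ≠ 0).card = (S.filter fun x => round x ≤ t ∧ Even (k x)).card := by
      congr 1
      ext x
      simp only [Finset.mem_filter, Finset.mem_univ, true_and, hS, hownT]
      constructor
      · rintro ⟨⟨hr, ho⟩, hvo0⟩
        rcases ho with ⟨h1, h2, h3⟩ | ⟨h1, h2⟩
        · exact ⟨⟨h1, h2⟩, hr, h3⟩
        · exact absurd h2 hvo0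
      · rintro ⟨⟨h1, h2⟩, hr, h3⟩
        exact ⟨⟨hr, Or.inl ⟨h1, h2, h3⟩⟩, h2⟩
    have hsubOc : (S.filter fun x => round x ≤ t ∧ ¬ Even (k x)) ⊆
        ((Finset.univ.filter (fun x => round x ≤ t ∧ owner x = false)).filter
        fun x => vo x ≠ 0) := by
      intro x hx
      simp only [Finset.mem_filter, Finset.mem_univ, true_and, hS, hownF] at hx ⊢
      exact ⟨⟨hx.2.1, by tauto⟩, hx.1.2⟩
    have d2 : (S.filter fun x => round x ≤ t ∧ ¬ Even (k x)).card ≤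
        ((Finset.univ.filter (fun x => round x ≤ t ∧ owner x = false)).filter
        fun x => vo x ≠ 0).card := Finset.card_le_card hsubOc
    have hva0 : va g ≠ 0 := by
      have := (hownT g).mp hg.2.2
      tauto
    rw [Finset.filter_erase]
    have hEO1 := hEO.1
    have hEO2 := hEO.2
    by_cases hvo0 : vo g = 0
    · obtain ⟨g', hg'1, hg'2, hg'3⟩ := hstar t g hva0 hvo0 hg.2.1
      have hg'own : owner g' = false := by
        rw [hownF]; tauto
      have d3 : (S.filter fun x => round x ≤ t ∧ ¬ Even (k x)).card + 1 ≤
          ((Finset.univ.filter (fun x => round x ≤ t ∧ owner x = false)).filter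
          fun x => vo x ≠ 0).card := by
        refine Finset.card_lt_card ((Finset.ssubset_iff_of_subset hsubOc).mpr ⟨g', ?_, ?_⟩)
        · simp only [Finset.mem_filter, Finset.mem_univ, true_and]
          exact ⟨⟨hg'3, hg'own⟩, hg'1⟩
        · intro hmem
          rw [Finset.mem_filter, hS, Finset.mem_filter] at hmem
          exact hmem.1.2.1 hg'2
      have d4 : ((((Finset.univ.filter (fun x => round x ≤ t ∧ owner x = true))).filter
          fun x => vo x ≠ 0).erase g).card ≤ (S.filter fun x =>
          round x ≤ t ∧ Even (k x)).card := by
        rw [← d1]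
        exact Finset.card_le_card (Finset.erase_subset _ _)
      have hfin : ((((Finset.univ.filter (fun x => round x ≤ t ∧ owner x = true))).filter
          fun x => vo x ≠ 0).erase g).card ≤ (((Finset.univ.filter
          (fun x => round x ≤ t ∧ owner x = false))).filter fun x => vo x ≠ 0).card := by
        omega
      exact_mod_cast hfin
    · have hgmem : g ∈ (((Finset.univ.filter (fun x => round x ≤ t ∧ owner x = true))).filter
          fun x => vo x ≠ 0) := by
        simp only [Finset.mem_filter, Finset.mem_univ, true_and]
        exact ⟨⟨hg.2.1, hg.2.2⟩, hvo0⟩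
      have d5 : ((((Finset.univ.filter (fun x => round x ≤ t ∧ owner x = true))).filter
          fun x => vo x ≠ 0).erase g).card = (S.filter fun x =>
          round x ≤ t ∧ Even (k x)).card - 1 := by
        rw [Finset.card_erase_of_mem hgmem, d1]
      have hfin : ((((Finset.univ.filter (fun x => round x ≤ t ∧ owner x = true))).filter
          fun x => vo x ≠ 0).erase g).card ≤ (((Finset.univ.filter
          (fun x => round x ≤ t ∧ owner x = false))).filter fun x => vo x ≠ 0).card := by
        omega
      exact_mod_cast hfin

/-- For two agents with generalized binary valuations (all values in `{0, b}`,
`b > 0`) and goods arriving over `T` rounds, there is an allocation sequence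
(cumulative bundles partitioning the goods arrived so far, monotone over time)
that is TEFX at every round. -/
theorem stmt15 {G : Type*} [Fintype G] [DecidableEq G] (T : ℕ) (b : ℝ) (hb : 0 < b)
    (round : G → Fin T) (v : Fin 2 → G → ℝ)
    (hv : ∀ (i : Fin 2) (g : G), v i g = 0 ∨ v i g = b) :
    ∃ A : Fin T → Fin 2 → Finset G,
      (∀ t : Fin T, A t 0 ∪ A t 1 = Finset.univ.filter (fun g => round g ≤ t)) ∧
      (∀ t : Fin T, Disjoint (A t 0) (A t 1)) ∧
      (∀ t t' : Fin T, t ≤ t' → ∀ i : Fin 2, A t i ⊆ A t' i) ∧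
      (∀ t : Fin T, ∀ i j : Fin 2, ∀ g ∈ A t j,
        ((A t j).erase g).sum (v i) ≤ (A t i).sum (v i)) := by
  classical
  have hnn : ∀ (w : Fin 2) (g : G), 0 ≤ v w g := by
    intro w g
    rcases hv w g with h | h <;> simp [h, hb.le]
  have hself : ∀ (s : Finset G) (i : Fin 2) (g : G), (s.erase g).sum (v i) ≤ s.sum (v i) :=
    fun s i g => Finset.sum_le_sum_of_subset_of_nonneg (Finset.erase_subset _ _)
      (fun x _ _ => hnn i x)
  have h2 : ∀ x : Fin 2, x = 0 ∨ x = 1 := by decide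
  by_cases F : ∃ g, (v 0 g ≠ 0 ∧ v 1 g = 0) ∧
      ∀ g', (v 1 g' ≠ 0 ∧ v 0 g' = 0) → round g ≤ round g'
  · have hstar : ∀ t : Fin T, ∀ g, v 1 g ≠ 0 → v 0 g = 0 → round g ≤ t →
        ∃ g', v 0 g' ≠ 0 ∧ v 1 g' = 0 ∧ round g' ≤ t := by
      intro t g hg1 hg0 hgt
      obtain ⟨g0, ⟨h00, h01⟩, hall⟩ := F
      exact ⟨g0, h00, h01, le_trans (hall g ⟨hg1, hg0⟩) hgt⟩
    obtain ⟨B, hu, hd, hm, hA, hO⟩ := aux_alloc15 T b hb round (v 1) (v 0)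
      (fun g => hv 1 g) (fun g => hv 0 g) hstar
    refine ⟨fun t i => if i = 0 then B t false else B t true, ?_, ?_, ?_, ?_⟩
    · intro t
      simp only [if_pos rfl, if_neg (by decide : ¬ (1 : Fin 2) = 0)]
      rw [Finset.union_comm]
      exact hu t
    · intro t
      simp only [if_pos rfl, if_neg (by decide : ¬ (1 : Fin 2) = 0)]
      exact (hd t).symm
    · intro t t' htt i
      by_cases hi : i = 0
      · rw [hi]; simp only [if_pos rfl]; exact hm t t' htt false
      · simp only [if_neg hi]; exact hm t t' htt true
    · intro t i j g hg
      by_cases hij : i = j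
      · subst hij; exact hself _ i g
      · rcases h2 i with hi | hi <;> rcases h2 j with hj | hj <;>
          first | (exact absurd (hi.trans hj.symm) hij) | skip
        · subst hi; subst hj
          simp only [if_pos rfl, if_neg (by decide : ¬ (1 : Fin 2) = 0)] at hg ⊢
          exact hO t g hg
        · subst hi; subst hj
          simp only [if_pos rfl, if_neg (by decide : ¬ (1 : Fin 2) = 0)] at hg ⊢
          exact hA t g hg
  · have hstar : ∀ t : Fin T, ∀ g, v 0 g ≠ 0 → v 1 g = 0 → round g ≤ t →
        ∃ g', v 1 g' ≠ 0 ∧ v 0 g' = 0 ∧ round g' ≤ t := by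
      intro t g hg0 hg1 hgt
      push_neg at F
      obtain ⟨g', hg', hlt⟩ := F g ⟨hg0, hg1⟩
      exact ⟨g', hg'.1, hg'.2, le_trans (le_of_lt hlt) hgt⟩
    obtain ⟨B, hu, hd, hm, hA, hO⟩ := aux_alloc15 T b hb round (v 0) (v 1)
      (fun g => hv 0 g) (fun g => hv 1 g) hstar
    refine ⟨fun t i => if i = 0 then B t true else B t false, ?_, ?_, ?_, ?_⟩
    · intro t
      simp only [if_pos rfl, if_neg (by decide : ¬ (1 : Fin 2) = 0)]
      exact hu t
    · intro t
      simp only [if_pos rfl, if_neg (by decide : ¬ (1 : Fin 2) = 0)]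
      exact hd t
    · intro t t' htt i
      by_cases hi : i = 0
      · rw [hi]; simp only [if_pos rfl]; exact hm t t' htt true
      · simp only [if_neg hi]; exact hm t t' htt false
    · intro t i j g hg
      by_cases hij : i = j
      · subst hij; exact hself _ i g
      · rcases h2 i with hi | hi <;> rcases h2 j with hj | hj <;>
          first | (exact absurd (hi.trans hj.symm) hij) | skip
        · subst hi; subst hj
          simp only [if_pos rfl, if_neg (by decide : ¬ (1 : Fin 2) = 0)] at hg ⊢
          exact hA t g hg
        · subst hi; subst hj
          simp only [if_pos rfl, if_neg (by decide : ¬ (1 : Fin 2) = 0)] at hg ⊢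
          exact hO t g hg
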